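/- For a finite nonempty subset A of a commutative group Z, σ(A) = δ(A)² or δ(A) = σ(A)² holds if and only if A is a coset of a finite subgroup of Z (equivalently, σ(A) = δ(A) = 1). -/

import Mathlib

open Pointwise Finset

section Aux
variable {G : Type*} [AddCommGroup G] [DecidableEq G]

lemma ED {A B : Finset G} (hP : ∀ A' ⊆ A, #(A + B) * #A' ≤ #(A' + B) * #A)
    {C : Finset G} {c : G} (hc : c ∈ C)
    (heq : #(A + B + C) * #A = #(A + B) * #(A + C)) :
    #(A + B + C.erase c) * #A = #(A + B) * #(A + C.erase c) := by
  classical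
  set C' := C.erase c with hC'
  have hCins : C = insert c C' := (Finset.insert_erase hc).symm
  set A₁ := A.filter (fun a => a + c ∈ A + C') with hA₁
  have hA₁sub : A₁ ⊆ A := Finset.filter_subset _ _
  -- key1
  have haddsingle : ∀ (X : Finset G), #(X + {c}) = #X := by
    intro X
    rw [Finset.add_singleton]
    exact Finset.card_image_of_injective _ (fun u v huv => by simpa using huv)
  have key1 : #(A + C) + #A₁ = #(A + C') + #A := by
    have haC : A + C = (A + C') ∪ (A + {c}) := by
      rw [hCins, Finset.insert_eq, Finset.add_union, Finset.union_comm]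
    have hinter : (A + C') ∩ (A + {c}) = A₁.image (· + c) := by
      ext u
      simp only [Finset.mem_inter, Finset.mem_image, hA₁, Finset.mem_filter]
      constructor
      · rintro ⟨h1, h2⟩
        obtain ⟨a, ha, b, hb, hab⟩ := Finset.mem_add.1 h2
        simp only [Finset.mem_singleton] at hb
        subst hb
        exact ⟨a, ⟨ha, by rwa [hab]⟩, hab⟩
      · rintro ⟨a, ⟨ha, hmem⟩, rfl⟩
        exact ⟨hmem, Finset.add_mem_add ha (Finset.mem_singleton_self c)⟩
    have := Finset.card_union_add_card_inter (A + C') (A + {c})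
    rw [← haC, hinter, haddsingle,
      Finset.card_image_of_injective _ (fun u v huv => by simpa using huv : Function.Injective (· + c))] at this
    exact this
  -- key2
  have key2 : #(A + B + C) + #(A₁ + B) ≤ #(A + B + C') + #(A + B) := by
    have hABC : A + B + C = (A + B + C') ∪ (A + B + {c}) := by
      rw [hCins, Finset.insert_eq, Finset.add_union, Finset.union_comm]
    have hW1 : A₁ + B + {c} ⊆ A + B + {c} :=
      Finset.add_subset_add_right (Finset.add_subset_add_right hA₁sub)
    have hW2 : A₁ + B + {c} ⊆ A + B + C' := by
      intro u hu
      obtain ⟨v, hv, w, hw, hvw⟩ := Finset.mem_add.1 hu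
      simp only [Finset.mem_singleton] at hw
      obtain ⟨a, ha, b, hb, hab⟩ := Finset.mem_add.1 hv
      simp only [hA₁, Finset.mem_filter] at ha
      have : u = (a + c) + b := by rw [← hvw, ← hab, hw]; abel
      rw [this]
      have hac : a + c ∈ A + C' := ha.2
      have : (a + c) + b ∈ (A + C') + B := Finset.add_mem_add hac hb
      rwa [add_right_comm] at this
    have hsubun : A + B + C ⊆ (A + B + C') ∪ ((A + B + {c}) \ (A₁ + B + {c})) := by
      rw [hABC]
      intro u hu
      rcases Finset.mem_union.1 hu with h | h
      · exact Finset.mem_union_left _ h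
      · by_cases hW : u ∈ A₁ + B + {c}
        · exact Finset.mem_union_left _ (hW2 hW)
        · exact Finset.mem_union_right _ (Finset.mem_sdiff.2 ⟨h, hW⟩)
    have h1 : #(A + B + C) ≤ #(A + B + C') + #((A + B + {c}) \ (A₁ + B + {c})) :=
      le_trans (Finset.card_le_card hsubun) (Finset.card_union_le _ _)
    have h2 : #((A + B + {c}) \ (A₁ + B + {c})) = #(A + B) - #(A₁ + B) := by
      rw [Finset.card_sdiff_of_subset hW1, haddsingle, haddsingle]
    have h3 : #(A₁ + B) ≤ #(A + B) :=
      Finset.card_le_card (Finset.add_subset_add_right hA₁sub)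
    omega
  have key3 : #(A + B) * #A₁ ≤ #(A₁ + B) * #A := hP A₁ hA₁sub
  have key4 : #(A + B + C') * #A ≤ #(A + B) * #(A + C') :=
    by have h := Finset.pluennecke_petridis_inequality_add C' hP; rwa [add_comm C' A, add_right_comm A C' B] at h
  -- arithmetic
  have e1 : #(A + B + C) * #A + #(A₁ + B) * #A ≤ #(A + B + C') * #A + #(A + B) * #A := by
    have := Nat.mul_le_mul_right #A key2
    rwa [add_mul, add_mul] at this
  rw [heq] at e1
  have e2 : #(A + B) * #(A + C) + #(A + B) * #A₁ = #(A + B) * #(A + C') + #(A + B) * #A := by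
    rw [← mul_add, ← mul_add, key1]
  exact le_antisymm key4 (by linarith)

lemma ED_subsets {A B : Finset G} (hP : ∀ A' ⊆ A, #(A + B) * #A' ≤ #(A' + B) * #A) :
    ∀ C : Finset G, #(A + B + C) * #A = #(A + B) * #(A + C) →
      ∀ S ⊆ C, #(A + B + S) * #A = #(A + B) * #(A + S) := by
  intro C
  induction C using Finset.strongInductionOn with
  | _ C ih =>
    intro heq S hS
    by_cases h : S = C
    · subst h; exact heq
    · obtain ⟨c, hcC, hcS⟩ : ∃ c ∈ C, c ∉ S := by
        by_contra hcon
        push_neg at hcon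
        exact h (Finset.Subset.antisymm hS hcon)
      exact ih (C.erase c) (Finset.erase_ssubset hcC) (ED hP hcC heq) S
        (Finset.subset_erase.2 ⟨hS, hcS⟩)

/-- If `#(A - A) = #A`, then `A` is a coset of a finite subgroup. -/
lemma coset_of_card_sub_eq (A : Finset G) (hA : A.Nonempty)
    (h : #(A - A) = #A) :
    ∃ (H : AddSubgroup G) (z : G), (H : Set G).Finite ∧ (A : Set G) = z +ᵥ (H : Set G) := by
  obtain ⟨a₀, ha₀⟩ := hA
  -- A - A = A - {a} for every a ∈ A
  have key : ∀ a ∈ A, A - A = A - {a} := by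
    intro a ha
    have hsub : A - {a} ⊆ A - A := by
      apply Finset.sub_subset_sub_left
      simpa using ha
    have hcard : #(A - {a}) = #A := by
      rw [Finset.sub_singleton]
      exact Finset.card_image_of_injective _ (fun u v huv => by simpa using huv)
    exact (Finset.eq_of_subset_of_card_le hsub (by rw [hcard, h])).symm
  have memD : ∀ u, u ∈ A - A ↔ ∃ w ∈ A, w - a₀ = u := by
    intro u
    rw [key a₀ ha₀, Finset.sub_singleton]
    simp
  refine ⟨{ carrier := (↑(A - A) : Set G)
            zero_mem' := by
              simp only [Finset.coe_sub, Set.mem_sub]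
              exact ⟨a₀, ha₀, a₀, ha₀, sub_self a₀⟩
            add_mem' := ?_
            neg_mem' := ?_ }, a₀, ?_, ?_⟩
  · rintro h₁ h₂ hh₁ hh₂
    simp only [Set.mem_setOf_eq, Finset.mem_coe] at *
    obtain ⟨u, hu, v, hv, rfl⟩ := Finset.mem_sub.1 hh₂
    have : h₁ ∈ A - {u} := by rw [← key u hu]; exact hh₁
    obtain ⟨w, hw, rfl⟩ := by simpa [Finset.sub_singleton] using this
    have : w - u + (u - v) = w - v := by abel
    rw [this]
    exact Finset.sub_mem_sub hw hv
  · rintro g hg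
    simp only [Set.mem_setOf_eq, Finset.mem_coe] at *
    obtain ⟨u, hu, v, hv, rfl⟩ := Finset.mem_sub.1 hg
    have : -(u - v) = v - u := by abel
    rw [this]
    exact Finset.sub_mem_sub hv hu
  · exact Finset.finite_toSet _
  · ext x
    simp only [AddSubgroup.coe_set_mk, Set.mem_vadd_set, Finset.mem_coe]
    constructor
    · intro hx
      exact ⟨x - a₀, Finset.sub_mem_sub hx ha₀, by simp only [vadd_eq_add]; abel⟩
    · rintro ⟨u, hu, rfl⟩
      obtain ⟨w, hw, rfl⟩ := (memD u).1 hu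
      have : a₀ +ᵥ (w - a₀) = w := by simp only [vadd_eq_add]; abel
      rwa [this]

lemma card_coset_dir (A : Finset G) (hA : A.Nonempty) (H : AddSubgroup G) (z : G)
    (hset : (A : Set G) = z +ᵥ (H : Set G)) :
    #(A + A) = #A ∧ #(A - A) = #A := by
  obtain ⟨a₀, ha₀⟩ := hA
  have memA : ∀ a : G, a ∈ A ↔ -z + a ∈ H := by
    intro a
    have : a ∈ A ↔ a ∈ (A : Set G) := by simp
    rw [this, hset, Set.mem_vadd_set_iff_neg_vadd_mem]
    simp [vadd_eq_add]
  have hmix : ∀ a ∈ A, ∀ b ∈ A, ∀ c ∈ A, a + b - c ∈ A := by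
    intro a ha b hb c hc
    rw [memA] at *
    have : -z + (a + b - c) = (-z + a) + (-z + b) - (-z + c) := by abel
    rw [this]
    exact AddSubgroup.sub_mem H (AddSubgroup.add_mem H ha hb) hc
  have h1 : A + A = A + {a₀} := by
    apply Finset.Subset.antisymm
    · intro u hu
      obtain ⟨a, ha, b, hb, rfl⟩ := Finset.mem_add.1 hu
      refine Finset.mem_add.2 ⟨a + b - a₀, hmix a ha b hb a₀ ha₀, a₀, by simp, by abel⟩
    · intro u hu
      obtain ⟨a, ha, b, hb, rfl⟩ := Finset.mem_add.1 hu
      simp only [Finset.mem_singleton] at hb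
      subst hb
      exact Finset.add_mem_add ha ha₀
  have h2 : A - A = A - {a₀} := by
    apply Finset.Subset.antisymm
    · intro u hu
      obtain ⟨a, ha, b, hb, rfl⟩ := Finset.mem_sub.1 hu
      have : a - b = (a + a₀ - b) - a₀ := by abel
      rw [this]
      have : a + a₀ - b ∈ A := hmix a ha a₀ ha₀ b hb
      exact Finset.sub_mem_sub this (by simp)
    · intro u hu
      obtain ⟨a, ha, b, hb, rfl⟩ := Finset.mem_sub.1 hu
      simp only [Finset.mem_singleton] at hb
      subst hb
      exact Finset.sub_mem_sub ha ha₀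
  constructor
  · rw [h1, Finset.add_singleton]
    exact Finset.card_image_of_injective _ (fun u v huv => by simpa using huv)
  · rw [h2, Finset.sub_singleton]
    exact Finset.card_image_of_injective _ (fun u v huv => by simpa using huv)

lemma case2_card (A : Finset G) (hA : A.Nonempty)
    (h2 : #A * #(A - A) = #(A + A) ^ 2) : #(A - A) = #A := by
  obtain ⟨a₀, ha₀⟩ := hA
  set D := A - A with hD
  have exP : ∀ d : G, d ∈ D → ∃ p : G × G, p.1 ∈ A ∧ p.2 ∈ A ∧ p.1 - p.2 = d := by
    intro d hd
    obtain ⟨u, hu, v, hv, huv⟩ := Finset.mem_sub.1 hd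
    exact ⟨(u, v), hu, hv, huv⟩
  classical
  set pf : G → G × G := fun d => if h : d ∈ D then (exP d h).choose else (0, 0) with hpf
  have pspec : ∀ d ∈ D, (pf d).1 ∈ A ∧ (pf d).2 ∈ A ∧ (pf d).1 - (pf d).2 = d := by
    intro d h
    simp only [hpf, dif_pos h]
    exact (exP d h).choose_spec
  set F : G × G → G × G := fun q => (q.2 + (pf q.1).1, q.2 + (pf q.1).2) with hF
  have hinj : Set.InjOn F ↑(D ×ˢ A) := by
    intro q hq q' hq' hFq
    simp only [Finset.coe_product, Set.mem_prod, Finset.mem_coe] at hq hq'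
    have h1 : q.2 + (pf q.1).1 = q'.2 + (pf q'.1).1 := congrArg Prod.fst hFq
    have h2' : q.2 + (pf q.1).2 = q'.2 + (pf q'.1).2 := congrArg Prod.snd hFq
    have hd : q.1 = q'.1 := by
      have e1 := (pspec q.1 hq.1).2.2
      have e2 := (pspec q'.1 hq'.1).2.2
      rw [← e1, ← e2]
      have : (q.2 + (pf q.1).1) - (q.2 + (pf q.1).2) = (pf q.1).1 - (pf q.1).2 := by abel
      rw [← this, h1, h2']
      abel
    have : q.2 = q'.2 := by
      rw [hd] at h1
      exact add_right_cancel h1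
    exact Prod.ext hd this
  have hsub : (D ×ˢ A).image F ⊆ (A + A) ×ˢ (A + A) := by
    intro u hu
    obtain ⟨q, hq, rfl⟩ := Finset.mem_image.1 hu
    rw [Finset.mem_product] at hq ⊢
    obtain ⟨h1, h2', _⟩ := pspec q.1 hq.1
    exact ⟨Finset.add_mem_add hq.2 h1, Finset.add_mem_add hq.2 h2'⟩
  have hcard : #((D ×ˢ A).image F) = #((A + A) ×ˢ (A + A)) := by
    rw [Finset.card_image_of_injOn hinj, Finset.card_product, Finset.card_product]
    rw [hD, mul_comm]
    rw [sq] at h2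
    exact h2
  have himg : (D ×ˢ A).image F = (A + A) ×ˢ (A + A) :=
    Finset.eq_of_subset_of_card_le hsub (le_of_eq hcard.symm)
  -- now x ≤ n
  have hxn : #(A + A) ≤ #A := by
    have hAA : A + A ⊆ A.image (fun u => u + (pf (0 : G)).1) := by
      intro s hs
      have : (s, s) ∈ (D ×ˢ A).image F := by
        rw [himg, Finset.mem_product]; exact ⟨hs, hs⟩
      obtain ⟨q, hq, hFq⟩ := Finset.mem_image.1 this
      rw [Finset.mem_product] at hq
      have h1 : q.2 + (pf q.1).1 = s := congrArg Prod.fst hFq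
      have h2' : q.2 + (pf q.1).2 = s := congrArg Prod.snd hFq
      have hab : (pf q.1).1 = (pf q.1).2 := by
        have := h1.trans h2'.symm
        exact add_left_cancel this
      have hq10 : q.1 = 0 := by
        have := (pspec q.1 hq.1).2.2
        rw [hab] at this
        simpa using this.symm
      rw [hq10] at h1
      exact Finset.mem_image.2 ⟨q.2, hq.2, h1⟩
    calc #(A + A) ≤ #(A.image (fun u => u + (pf (0 : G)).1)) := Finset.card_le_card hAA
      _ ≤ #A := Finset.card_image_le
  have hnx : #A ≤ #(A + A) := by
    have : {a₀} + A ⊆ A + A := Finset.add_subset_add_right (by simpa using ha₀)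
    calc #A = #({a₀} + A) := by
          rw [Finset.singleton_add]
          exact (Finset.card_image_of_injective _ (fun u v huv => by simpa using huv)).symm
      _ ≤ #(A + A) := Finset.card_le_card this
  have hxeq : #(A + A) = #A := le_antisymm hxn hnx
  have hApos : 0 < #A := Finset.card_pos.2 ⟨a₀, ha₀⟩
  rw [hxeq, sq] at h2
  exact Nat.eq_of_mul_eq_mul_left hApos h2

lemma singleton_sub_card (a : G) (S : Finset G) : #({a} - S) = #S := by
  rw [Finset.singleton_sub]
  exact Finset.card_image_of_injective _ sub_right_injective

lemma sub_singleton_card (a : G) (S : Finset G) : #(S - {a}) = #S := by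
  rw [Finset.sub_singleton]
  exact Finset.card_image_of_injective _ (fun u v huv => by simpa using huv)

lemma inter_sub_card (S : Finset G) (t t' : G) :
    #((S - {t}) ∩ (S - {t'})) = #(S.filter (fun e => e - (t - t') ∈ S)) := by
  have himg : (S - {t}) ∩ (S - {t'}) = (S.filter (fun e => e - (t - t') ∈ S)).image (· - t) := by
    ext u
    simp only [Finset.mem_inter, Finset.mem_image, Finset.mem_filter, Finset.sub_singleton]
    constructor
    · rintro ⟨h1, h2⟩
      obtain ⟨a, ha, rfl⟩ := h1
      obtain ⟨b, hb, hba⟩ := h2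
      refine ⟨a, ⟨ha, ?_⟩, rfl⟩
      have : a - (t - t') = b := by
        rw [show a - (t - t') = a - t + t' from by abel, ← hba]
        abel
      rwa [this]
    · rintro ⟨a, ⟨ha, ha2⟩, rfl⟩
      refine ⟨⟨a, ha, rfl⟩, ⟨a - (t - t'), ha2, ?_⟩⟩
      abel
  rw [himg]
  exact Finset.card_image_of_injective _ (fun u v huv => by simpa using huv)

lemma sub_pair_card (S : Finset G) (t t' : G) :
    #(S - {t, t'}) + #(S.filter (fun e => e - (t - t') ∈ S)) = #S + #S := by
  have hsplit : S - {t, t'} = (S - {t}) ∪ (S - {t'}) := by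
    have h : ({t, t'} : Finset G) = {t} ∪ {t'} := by
      rw [Finset.insert_eq]
    rw [h, Finset.sub_union]
  have h2 := Finset.card_union_add_card_inter (S - {t}) (S - {t'})
  rw [← hsplit, inter_sub_card, sub_singleton_card, sub_singleton_card] at h2
  exact h2

lemma case1_card (A : Finset G) (hA : A.Nonempty)
    (h1 : #(A + A) * #A = #(A - A) ^ 2) : #(A - A) = #A := by
  classical
  obtain ⟨a₀, ha₀⟩ := hA
  have hA : A.Nonempty := ⟨a₀, ha₀⟩
  have npos : 0 < #A := hA.card_pos
  have ypos : 0 < #(A - A) := (hA.sub hA).card_pos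
  have xpos : 0 < #(A + A) := (hA.add hA).card_pos
  have hny : #A ≤ #(A - A) :=
    (sub_singleton_card a₀ A) ▸ Finset.card_le_card
      (Finset.sub_subset_sub_left (by simpa using ha₀))
  have h1' : #(A + A) * #A = #(A - A) * #(A - A) := by rw [h1, sq]
  -- Step A : minimization
  have hA' : A ∈ A.powerset.erase ∅ :=
    Finset.mem_erase_of_ne_of_mem hA.ne_empty (Finset.mem_powerset_self _)
  obtain ⟨U, hU, hUmin⟩ := Finset.exists_min_image (A.powerset.erase ∅)
    (fun V => (#(V - A) : ℚ≥0) / #V) ⟨A, hA'⟩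
  rw [Finset.mem_erase, Finset.mem_powerset, ← Finset.nonempty_iff_ne_empty] at hU
  have cross : ∀ V W : Finset G, V.Nonempty → W.Nonempty →
      ((#(V - A) : ℚ≥0) / #V ≤ (#(W - A) : ℚ≥0) / #W) →
      #(V - A) * #W ≤ #(W - A) * #V := by
    intro V W hV hW h
    have hV0 : (0 : ℚ≥0) < #V := by exact_mod_cast hV.card_pos
    have hW0 : (0 : ℚ≥0) < #W := by exact_mod_cast hW.card_pos
    rw [div_le_div_iff₀ hV0 hW0] at h
    exact_mod_cast h
  have hP_U : ∀ U' ⊆ U, #(U + -A) * #U' ≤ #(U' + -A) * #U := by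
    intro U' hU'
    rcases U'.eq_empty_or_nonempty with rfl | hne
    · simp
    · have hmem : U' ∈ A.powerset.erase ∅ :=
        Finset.mem_erase_of_ne_of_mem hne.ne_empty
          (Finset.mem_powerset.2 (hU'.trans hU.2))
      have := cross U U' hU.1 hne (hUmin U' hmem)
      simpa only [← sub_eq_add_neg] using this
  have petr : #(U + -A + -A) * #U ≤ #(U + -A) * #(U + -A) :=
    by have h := Finset.pluennecke_petridis_inequality_add (-A) hP_U; rwa [add_comm (-A) U] at h
  have petr' : #(U - A - A) * #U ≤ #(U - A) * #(U - A) := by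
    simpa only [← sub_eq_add_neg] using petr
  have hUA : #(U - A) * #A ≤ #(A - A) * #U := cross U A hU.1 hA (hUmin A hA')
  have hxle : #(A + A) ≤ #(U - A - A) := by
    obtain ⟨u₀, hu₀⟩ := hU.1
    have hsubset : {u₀} - (A + A) ⊆ U - A - A := by
      intro v hv
      obtain ⟨s, hs, w, hw, hsw⟩ := Finset.mem_sub.1 hv
      simp only [Finset.mem_singleton] at hs
      obtain ⟨a, ha, b, hb, hab⟩ := Finset.mem_add.1 hw
      have : v = (u₀ - a) - b := by rw [← hsw, hs, ← hab]; abel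
      rw [this]
      exact Finset.sub_mem_sub (Finset.sub_mem_sub hu₀ ha) hb
    calc #(A + A) = #({u₀} - (A + A)) := (singleton_sub_card _ _).symm
      _ ≤ #(U - A - A) := Finset.card_le_card hsubset
  -- squeeze : #A ≤ #U
  have t1 : #(A + A) * #U ≤ #(U - A) * #(U - A) :=
    le_trans (Nat.mul_le_mul_right _ hxle) petr'
  have t3 : (#(A + A) * #A * #U) * #A ≤ (#(A + A) * #A * #U) * #U := by
    calc (#(A + A) * #A * #U) * #A = (#(A + A) * #U) * (#A * #A) := by ring
      _ ≤ (#(U - A) * #(U - A)) * (#A * #A) := Nat.mul_le_mul_right _ t1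
      _ = (#(U - A) * #A) * (#(U - A) * #A) := by ring
      _ ≤ (#(A - A) * #U) * (#(A - A) * #U) := Nat.mul_le_mul hUA hUA
      _ = (#(A - A) * #(A - A)) * (#U * #U) := by ring
      _ = (#(A + A) * #A) * (#U * #U) := by rw [h1']
      _ = (#(A + A) * #A * #U) * #U := by ring
  have hUpos : 0 < #U := hU.1.card_pos
  have hnm : #A ≤ #U :=
    Nat.le_of_mul_le_mul_left t3 (by positivity)
  have hUeq : U = A := Finset.eq_of_subset_of_card_le hU.2 hnm
  subst hUeq
  -- equality at C = -A
  have E0 : #(U + -U + -U) * #U = #(U + -U) * #(U + -U) := by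
    refine le_antisymm (by have h := Finset.pluennecke_petridis_inequality_add (-U) hP_U; rwa [add_comm (-U) U] at h) ?_
    have : #(U + -U) * #(U + -U) = #(U - U) * #(U - U) := by
      simp only [← sub_eq_add_neg]
    rw [this, ← h1']
    have : #(U + -U + -U) = #(U - U - U) := by simp only [← sub_eq_add_neg]
    rw [this]
    calc #(U + U) * #U ≤ #(U - U - U) * #U := Nat.mul_le_mul_right _ hxle
      _ = #(U - U - U) * #U := rfl
  have dagger : ∀ T ⊆ U, #(U - U - T) * #U = #(U - U) * #(U - T) := by
    intro T hT
    have := ED_subsets hP_U (-U) E0 (-T) (Finset.neg_subset_neg hT)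
    simpa only [← sub_eq_add_neg] using this
  -- final combinatorial step
  set D := U - U with hD
  set n := #U with hn
  set y := #D with hy
  have h0D : (0 : G) ∈ D := by
    rw [hD]
    have := Finset.sub_mem_sub ha₀ ha₀
    simpa using this
  set β : G → ℕ := fun g => #(U.filter (fun a => a - g ∈ U)) with hβ
  set δ : G → ℕ := fun g => #(D.filter (fun e => e - g ∈ D)) with hδ
  -- pair identity
  have pair : ∀ g ∈ D, n * δ g = y * β g := by
    intro g hg
    obtain ⟨t, ht, t', ht', htt⟩ := Finset.mem_sub.1 hg
    have hT : ({t, t'} : Finset G) ⊆ U := by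
      intro u hu
      rcases Finset.mem_insert.1 hu with rfl | hu
      · exact ht
      · rw [Finset.mem_singleton.1 hu]; exact ht'
    have hdag := dagger _ hT
    have hAT : #(U - {t, t'}) + β g = n + n := by
      simp only [hβ]
      rw [← htt]
      exact sub_pair_card U t t'
    have hDT : #(D - {t, t'}) + δ g = y + y := by
      simp only [hδ]
      rw [← htt]
      exact sub_pair_card D t t'
    have e1 : n * #(D - {t, t'}) + n * δ g = n * y + n * y := by
      rw [← Nat.mul_add, hDT, Nat.mul_add]
    have e2 : y * #(U - {t, t'}) + y * β g = y * n + y * n := by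
      rw [← Nat.mul_add, hAT, Nat.mul_add]
    have e3 : n * #(D - {t, t'}) = y * #(U - {t, t'}) := by
      rw [mul_comm n _]
      exact dagger _ hT
    have e4 : n * y = y * n := mul_comm n y
    linarith
  -- delta lower bound
  have dlow : ∀ g ∈ D, n ≤ δ g := by
    intro g hg
    obtain ⟨t, ht, t', ht', htt⟩ := Finset.mem_sub.1 hg
    set T := U.filter (fun a => a + g ∈ U) with hTdef
    have hTU : T ⊆ U := Finset.filter_subset _ _
    have hT'mem : t' ∈ T := by
      rw [hTdef, Finset.mem_filter]
      refine ⟨ht', ?_⟩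
      have : t' + g = t := by rw [← htt]; abel
      rwa [this]
    have hdag := dagger T hTU
    have hDlow : y ≤ #(D - T) := by
      calc y = #(D - {t'}) := (sub_singleton_card t' D).symm
        _ ≤ #(D - T) := Finset.card_le_card (Finset.sub_subset_sub_left (by simpa using hT'mem))
    have hUT : #(U - T) ≤ δ g := by
      simp only [hδ]
      apply Finset.card_le_card
      intro u hu
      obtain ⟨a, ha, τ, hτ, haτ⟩ := Finset.mem_sub.1 hu
      rw [hTdef, Finset.mem_filter] at hτ
      rw [Finset.mem_filter]
      constructor
      · rw [hD, ← haτ]; exact Finset.sub_mem_sub ha hτ.1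
      · have : u - g = a - (τ + g) := by rw [← haτ]; abel
        rw [this, hD]
        exact Finset.sub_mem_sub ha hτ.2
    have chain : y * n ≤ y * δ g := by
      calc y * n ≤ #(D - T) * n := Nat.mul_le_mul_right _ hDlow
        _ = y * #(U - T) := hdag
        _ ≤ y * δ g := Nat.mul_le_mul_left _ hUT
    exact Nat.le_of_mul_le_mul_left chain ypos
  -- sum of beta
  have sumβ : ∑ d ∈ D, β d = n * n := by
    have hfib := Finset.card_eq_sum_card_fiberwise
      (f := fun p : G × G => p.1 - p.2) (s := U ×ˢ U) (t := D)
      (fun p hp => by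
        rw [Finset.mem_coe, Finset.mem_product] at hp
        exact Finset.mem_coe.2 (Finset.sub_mem_sub hp.1 hp.2))
    rw [Finset.card_product, ← hn] at hfib
    rw [hfib]
    apply Finset.sum_congr rfl
    intro d hd
    have himg : (U ×ˢ U).filter (fun a => (fun p : G × G => p.1 - p.2) a = d)
        = (U.filter (fun a => a - d ∈ U)).image (fun a => (a, a - d)) := by
      ext p
      simp only [Finset.mem_filter, Finset.mem_product, Finset.mem_image]
      constructor
      · rintro ⟨⟨h1, h2⟩, h3⟩
        have hpd : p.1 - d = p.2 := by rw [← h3]; abel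
        refine ⟨p.1, ⟨h1, by rwa [hpd]⟩, ?_⟩
        rw [hpd]
      · rintro ⟨a, ⟨ha1, ha2⟩, rfl⟩
        exact ⟨⟨ha1, ha2⟩, by simp⟩
    simp only [hβ]
    rw [himg, Finset.card_image_of_injective _ (fun u v huv => (Prod.ext_iff.1 huv).1)]
  -- sum of delta
  have sumδ : ∑ d ∈ D, δ d = y * n := by
    have : ∑ d ∈ D, n * δ d = ∑ d ∈ D, y * β d := Finset.sum_congr rfl pair
    rw [← Finset.mul_sum, ← Finset.mul_sum, sumβ] at this
    have : n * (∑ d ∈ D, δ d) = n * (y * n) := by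
      rw [this]; ring
    exact Nat.eq_of_mul_eq_mul_left npos this
  have δ0 : δ 0 = y := by
    simp only [hδ, sub_zero]
    rw [Finset.filter_true_of_mem (fun e he => he)]
  -- conclude y ≤ n
  have hsplit : δ 0 + ∑ d ∈ D.erase 0, δ d = ∑ d ∈ D, δ d :=
    Finset.add_sum_erase D δ h0D
  have hrest : #(D.erase 0) * n ≤ ∑ d ∈ D.erase 0, δ d := by
    have := Finset.card_nsmul_le_sum (D.erase 0) δ n
      (fun d hd => dlow d (Finset.mem_of_mem_erase hd))
    simpa [smul_eq_mul] using this
  have hcarderase : #(D.erase 0) = y - 1 := by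
    rw [Finset.card_erase_of_mem h0D, hy]
  have hyn : y ≤ n := by
    have e5 : (y - 1) * n + n = y * n := by
      have hy1 : y - 1 + 1 = y := Nat.succ_pred_eq_of_pos ypos
      calc (y - 1) * n + n = (y - 1 + 1) * n := by ring
        _ = y * n := by rw [hy1]
    have e6 : y + (y - 1) * n ≤ y * n := by
      calc y + (y - 1) * n = δ 0 + (y - 1) * n := by rw [δ0]
        _ ≤ δ 0 + ∑ d ∈ D.erase 0, δ d := by
            apply Nat.add_le_add_left
            rw [← hcarderase]
            exact hrest
        _ = ∑ d ∈ D, δ d := hsplit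
        _ = y * n := sumδ
    rw [← e5] at e6
    obtain ⟨k, hk⟩ : ∃ k, (y - 1) * n = k := ⟨_, rfl⟩
    rw [hk] at e6
    omega
  exact le_antisymm hyn hny

end Aux

theorem stmt_10 {Z : Type*} [AddCommGroup Z] [DecidableEq Z] (A : Finset Z)
    (hA : A.Nonempty) :
    ((A + A).card * A.card = (A - A).card ^ 2 ∨
        A.card * (A - A).card = (A + A).card ^ 2) ↔
      ∃ (H : AddSubgroup Z) (z : Z), (H : Set Z).Finite ∧ (A : Set Z) = z +ᵥ (H : Set Z) := by
  constructor
  · rintro (h1 | h2)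
    · exact coset_of_card_sub_eq A hA (case1_card A hA h1)
    · exact coset_of_card_sub_eq A hA (case2_card A hA h2)
  · rintro ⟨H, z, hfin, hset⟩
    obtain ⟨hx, hy⟩ := card_coset_dir A hA H z hset
    left
    rw [hx, hy, sq]
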